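/- Let K be a hexagonal trefoil knot with the Huh–Jeon intersection pattern. Then the line P2 ∩ P5 (intersection of the planes of the triangular disks Δ2 and Δ5) meets K in at least four distinct points, one on each of the edges e12, e23, e45, e56; i.e., it is a quadrisecant of K. -/

import Mathlib

noncomputable section

/-- Points of ℝ³. -/
abbrev E3 : Type := Fin 3 → ℝ

/-- A line in ℝ³: the affine span of two distinct points, viewed as a set. -/
def IsLine (L : Set E3) : Prop :=
  ∃ p q : E3, p ≠ q ∧ L = (affineSpan ℝ ({p, q} : Set E3) : Set E3)

/-- A plane: an affine subspace of dimension 2. -/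
def IsPlane (P : AffineSubspace ℝ E3) : Prop :=
  Module.finrank ℝ P.direction = 2

/-- A (combinatorial) hexagon: six vertices in ℝ³, joined cyclically.
Paper vertex `v_i` corresponds to `v (i-1)`, paper edge `e_{i,i+1}` to `edge (i-1)`,
paper disk `Δ_i` to `disk (i-1)`, paper plane `P_i` to `P (i-1)`. -/
structure Hexagon where
  v : Fin 6 → E3

namespace Hexagon

variable (H : Hexagon)

/-- The closed edge from `v i` to `v (i+1)`. -/
def edge (i : Fin 6) : Set E3 := segment ℝ (H.v i) (H.v (i + 1))

/-- The open edge (interior of the edge) from `v i` to `v (i+1)`. -/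
def intEdge (i : Fin 6) : Set E3 := openSegment ℝ (H.v i) (H.v (i + 1))

/-- The hexagonal closed polygonal curve: union of the six edges. -/
def K : Set E3 := ⋃ i, H.edge i

/-- The triangular disk with vertices `v (i-1)`, `v i`, `v (i+1)`. -/
def disk (i : Fin 6) : Set E3 := convexHull ℝ ({H.v (i - 1), H.v i, H.v (i + 1)} : Set E3)

/-- The plane through `v (i-1)`, `v i`, `v (i+1)`. -/
def P (i : Fin 6) : AffineSubspace ℝ E3 :=
  affineSpan ℝ ({H.v (i - 1), H.v i, H.v (i + 1)} : Set E3)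

/-- General position: no three vertices collinear, no four vertices coplanar. -/
def GeneralPosition : Prop :=
  (∀ i j k : Fin 6, i ≠ j → i ≠ k → j ≠ k →
    ¬ Collinear ℝ ({H.v i, H.v j, H.v k} : Set E3)) ∧
  (∀ i j k l : Fin 6, i ≠ j → i ≠ k → i ≠ l → j ≠ k → j ≠ l → k ≠ l →
    ¬ Coplanar ℝ ({H.v i, H.v j, H.v k, H.v l} : Set E3))

/-- The Huh–Jeon intersection pattern: the only nonempty intersections of open edges with
interiors of triangular disks are `int e23 ∩ int Δ5`, `int e23 ∩ int Δ6`, `int e45 ∩ int Δ1`,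
`int e45 ∩ int Δ2`, `int e61 ∩ int Δ3`, `int e61 ∩ int Δ4` (in the paper's labels). -/
def HuhJeon : Prop :=
  ∀ i j : Fin 6, (H.intEdge i ∩ intrinsicInterior ℝ (H.disk j)).Nonempty ↔
    (i, j) ∈ ({(1, 4), (1, 5), (3, 0), (3, 1), (5, 2), (5, 3)} : Set (Fin 6 × Fin 6))

/-- The candidate quadrisecant line `L_{k+1}` of the paper: the intersection of the planes
`P (k+1)` and `P (k+4)` (for `k = 0, 1, 2`).  `QLine 0` is the paper's `L₁ = P₂ ∩ P₅`,
`QLine 1` is `L₂ = P₃ ∩ P₆`, and `QLine 2` is `L₃ = P₄ ∩ P₁`. -/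
def QLine (k : Fin 6) : Set E3 := (H.P (k + 1) : Set E3) ∩ (H.P (k + 4) : Set E3)

end Hexagon

/-- `L` is a quadrisecant of the curve `K`: a line meeting `K` in at least four points. -/
def IsQuadrisecantOf (K L : Set E3) : Prop :=
  IsLine L ∧ ∃ S : Finset E3, S.card = 4 ∧ (S : Set E3) ⊆ K ∩ L

/-- A quadrisecant of the hexagonal knot `H`. -/
def Hexagon.IsQuadrisecant (H : Hexagon) (L : Set E3) : Prop :=
  IsQuadrisecantOf H.K L

/-- A standard parametrization of the trefoil knot. -/
def trefoilCurve (t : ℝ) : E3 :=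
  ![Real.sin t + 2 * Real.sin (2 * t), Real.cos t - 2 * Real.cos (2 * t), - Real.sin (3 * t)]

/-- The standard trefoil knot as a subset of ℝ³. -/
def TrefoilSet : Set E3 := Set.range trefoilCurve

/-- The standard planar round circle (the unknot). -/
def UnknotSet : Set E3 := {x : E3 | x 0 ^ 2 + x 1 ^ 2 = 1 ∧ x 2 = 0}

/-- Two subsets of ℝ³ are equivalent as knots if there is an ambient isotopy of ℝ³
carrying one onto the other. -/
def KnotEquiv (K₁ K₂ : Set E3) : Prop :=
  ∃ F : ℝ → (E3 ≃ₜ E3), Continuous (fun p : ℝ × E3 => F p.1 p.2) ∧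
    F 0 = Homeomorph.refl E3 ∧ (F 1) '' K₁ = K₂

/-- `K` has the knot type of the trefoil. -/
def IsTrefoil (K : Set E3) : Prop := KnotEquiv K TrefoilSet

/-- `K` is an unknot: it has the knot type of a planar circle. -/
def IsUnknot (K : Set E3) : Prop := KnotEquiv K UnknotSet

/-- The closed polygonal curve with vertices `v 0, …, v (n-1)` joined cyclically. -/
def polyCurve (n : ℕ) [NeZero n] (v : Fin n → E3) : Set E3 :=
  ⋃ i, segment ℝ (v i) (v (i + 1))

/-- `v` determines an embedded (simple) closed polygonal curve: distinct vertices,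
adjacent edges meet exactly at their common vertex, non-adjacent edges are disjoint. -/
def IsSimplePolygon (n : ℕ) [NeZero n] (v : Fin n → E3) : Prop :=
  3 ≤ n ∧ Function.Injective v ∧
  (∀ i : Fin n,
    segment ℝ (v i) (v (i + 1)) ∩ segment ℝ (v (i + 1)) (v (i + 2)) = {v (i + 1)}) ∧
  (∀ i j : Fin n, j ≠ i → j ≠ i + 1 → j + 1 ≠ i →
    segment ℝ (v i) (v (i + 1)) ∩ segment ℝ (v j) (v (j + 1)) = ∅)

namespace Hexagon

/-- The quadrisecant approximation determined by marked points `c i`, `d i` on edge `i`: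
`O i = [c i, d i]` (straightened part of edge `i`) and `N i = [d (i-1), c i]`
(the segment cutting the corner at `v i`). -/
def QA (H : Hexagon) (c d : Fin 6 → E3) : Set E3 :=
  (⋃ i, segment ℝ (c i) (d i)) ∪ (⋃ i, segment ℝ (d (i - 1)) (c i))

/-- `c i`, `d i` are exactly the quadrisecant points on edge `i`, occurring in the
order `v i, c i, d i, v (i+1)` along the edge. -/
def QAData (H : Hexagon) (c d : Fin 6 → E3) : Prop :=
  ∀ i : Fin 6,
    ({c i, d i} : Set E3) = H.edge i ∩ (H.QLine 0 ∪ H.QLine 1 ∪ H.QLine 2) ∧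
    Sbtw ℝ (H.v i) (c i) (d i) ∧ Sbtw ℝ (c i) (d i) (H.v (i + 1))

end Hexagon

-- ==================== auxiliary machinery ====================
open Matrix

def dotL (n : E3) : E3 →ₗ[ℝ] ℝ where
  toFun x := x ⬝ᵥ n
  map_add' x y := add_dotProduct x y n
  map_smul' c x := by simp [smul_dotProduct]

def pfn (u w₁ w₂ x : E3) : ℝ := (x - u) ⬝ᵥ ((w₁ - u) ⨯₃ (w₂ - u))

lemma pfn_combo (u w₁ w₂ x y : E3) {s t : ℝ} (hst : s + t = 1) :
    pfn u w₁ w₂ (s • x + t • y) = s * pfn u w₁ w₂ x + t * pfn u w₁ w₂ y := by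
  unfold pfn
  have h : s • x + t • y - u = s • (x - u) + t • (y - u) := by
    match_scalars <;> linarith
  rw [h, add_dotProduct, smul_dotProduct, smul_dotProduct,
    smul_eq_mul, smul_eq_mul]

lemma pfn_self (u w₁ w₂ : E3) : pfn u w₁ w₂ u = 0 := by
  simp [pfn, sub_self, zero_dotProduct]

lemma pfn_w₁ (u w₁ w₂ : E3) : pfn u w₁ w₂ w₁ = 0 := dot_self_cross _ _
lemma pfn_w₂ (u w₁ w₂ : E3) : pfn u w₁ w₂ w₂ = 0 := dot_cross_self _ _

def pln (u w₁ w₂ : E3) : AffineSubspace ℝ E3 :=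
  AffineSubspace.mk' u (LinearMap.ker (dotL ((w₁ - u) ⨯₃ (w₂ - u))))

lemma mem_pln {u w₁ w₂ x : E3} : x ∈ pln u w₁ w₂ ↔ pfn u w₁ w₂ x = 0 := by
  rw [pln, AffineSubspace.mem_mk', LinearMap.mem_ker]
  rfl

lemma span_le_pln (u w₁ w₂ : E3) :
    affineSpan ℝ ({u, w₁, w₂} : Set E3) ≤ pln u w₁ w₂ := by
  rw [affineSpan_le]
  rintro x (rfl | rfl | rfl)
  · exact mem_pln.2 (pfn_self _ _ _)
  · exact mem_pln.2 (pfn_w₁ _ _ _)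
  · exact mem_pln.2 (pfn_w₂ _ _ _)

lemma pfn_zero_of_mem {u w₁ w₂ x : E3} (h : x ∈ affineSpan ℝ ({u, w₁, w₂} : Set E3)) :
    pfn u w₁ w₂ x = 0 := mem_pln.1 (span_le_pln u w₁ w₂ h)

lemma pfn_ne_zero {u w₁ w₂ y : E3} (hcop : ¬ Coplanar ℝ ({u, w₁, w₂, y} : Set E3)) :
    pfn u w₁ w₂ y ≠ 0 := by
  intro h0
  apply hcop
  have hdet : Matrix.det ![y - u, w₁ - u, w₂ - u] = 0 := by
    rw [← triple_product_eq_det]; exact h0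
  have hli : ¬ LinearIndependent ℝ ![y - u, w₁ - u, w₂ - u] := by
    intro hli
    have hu : IsUnit (Matrix.of ![y - u, w₁ - u, w₂ - u]) :=
      Matrix.linearIndependent_rows_iff_isUnit.1 hli
    have := (Matrix.isUnit_iff_isUnit_det _).1 hu
    rw [isUnit_iff_ne_zero] at this
    exact this hdet
  have hle : vectorSpan ℝ ({u, w₁, w₂, y} : Set E3) ≤
      Submodule.span ℝ (Set.range ![y - u, w₁ - u, w₂ - u]) := by
    rw [vectorSpan_eq_span_vsub_set_right ℝ (Set.mem_insert u _)]
    rw [show Set.range ![y - u, w₁ - u, w₂ - u] = {y - u, w₁ - u, w₂ - u} by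
      simp_rw [Matrix.range_cons, Matrix.range_empty, Set.singleton_union, insert_empty_eq]]
    conv_rhs => rw [← Submodule.span_insert_zero]
    apply Submodule.span_mono
    rintro z hz
    rw [Set.mem_image] at hz
    obtain ⟨w, hw, rfl⟩ := hz
    rw [Set.mem_insert_iff]
    rcases hw with rfl | rfl | rfl | rfl
    · left; simp
    · right; right; left; rfl
    · right; right; right; rfl
    · right; left; rfl
  have hfr : Module.finrank ℝ (Submodule.span ℝ (Set.range ![y - u, w₁ - u, w₂ - u])) ≤ 2 := by
    have hne : Fintype.card (Fin 3) ≠ Set.finrank ℝ (Set.range ![y - u, w₁ - u, w₂ - u]) := by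
      intro h; exact hli (linearIndependent_iff_card_eq_finrank_span.2 h)
    have hle3 : Module.finrank ℝ (Submodule.span ℝ (Set.range ![y - u, w₁ - u, w₂ - u])) ≤ 3 := by
      have := Submodule.finrank_le (Submodule.span ℝ (Set.range ![y - u, w₁ - u, w₂ - u]))
      simpa [Module.finrank_fin_fun] using this
    rw [Fintype.card_fin] at hne
    unfold Set.finrank at hne
    omega
  show Module.rank ℝ (vectorSpan ℝ ({u, w₁, w₂, y} : Set E3)) ≤ 2
  have h1 := Submodule.rank_mono (R := ℝ) hle
  have h2 : Module.rank ℝ (Submodule.span ℝ (Set.range ![y - u, w₁ - u, w₂ - u])) ≤ 2 := by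
    rw [← Module.finrank_eq_rank'] at *
    exact_mod_cast hfr
  exact h1.trans h2

lemma finrank_vectorSpan_triple {u w₁ w₂ : E3}
    (hcol : ¬ Collinear ℝ ({u, w₁, w₂} : Set E3)) :
    Module.finrank ℝ (vectorSpan ℝ ({u, w₁, w₂} : Set E3)) = 2 := by
  have hAI : AffineIndependent ℝ ![u, w₁, w₂] := affineIndependent_iff_not_collinear_set.2 hcol
  have h := hAI.finrank_vectorSpan (by simp : Fintype.card (Fin 3) = 2 + 1)
  rw [show Set.range ![u, w₁, w₂] = ({u, w₁, w₂} : Set E3) by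
    simp_rw [Matrix.range_cons, Matrix.range_empty, Set.singleton_union, insert_empty_eq]] at h
  exact h

lemma mem_span_of_pfn_eq_zero {u w₁ w₂ y x : E3}
    (hcol : ¬ Collinear ℝ ({u, w₁, w₂} : Set E3))
    (hy : pfn u w₁ w₂ y ≠ 0) (hx : pfn u w₁ w₂ x = 0) :
    x ∈ affineSpan ℝ ({u, w₁, w₂} : Set E3) := by
  set n := (w₁ - u) ⨯₃ (w₂ - u) with hn
  have hsurj : Function.Surjective (dotL n) := by
    intro c
    refine ⟨(c / pfn u w₁ w₂ y) • (y - u), ?_⟩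
    show ((c / pfn u w₁ w₂ y) • (y - u)) ⬝ᵥ n = c
    rw [smul_dotProduct]
    show (c / pfn u w₁ w₂ y) * ((y - u) ⬝ᵥ n) = c
    rw [show (y - u) ⬝ᵥ n = pfn u w₁ w₂ y from rfl]
    field_simp
  have hker : Module.finrank ℝ (LinearMap.ker (dotL n)) = 2 := by
    have h1 := LinearMap.finrank_range_add_finrank_ker (dotL n)
    rw [LinearMap.range_eq_top.2 hsurj, finrank_top] at h1
    have h2 : Module.finrank ℝ E3 = 3 := Module.finrank_fin_fun (R := ℝ)
    have h3 : Module.finrank ℝ ℝ = 1 := Module.finrank_self ℝ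
    omega
  have hle : affineSpan ℝ ({u, w₁, w₂} : Set E3) ≤ pln u w₁ w₂ := span_le_pln u w₁ w₂
  have hdle := AffineSubspace.direction_le hle
  rw [direction_affineSpan] at hdle
  have hdir : (pln u w₁ w₂).direction = LinearMap.ker (dotL n) :=
    AffineSubspace.direction_mk' _ _
  have hdle' : vectorSpan ℝ ({u, w₁, w₂} : Set E3) ≤ LinearMap.ker (dotL n) := by
    rw [← hdir]; exact hdle
  have heq : vectorSpan ℝ ({u, w₁, w₂} : Set E3) = LinearMap.ker (dotL n) :=
    Submodule.eq_of_le_of_finrank_le hdle' (by rw [hker, finrank_vectorSpan_triple hcol])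
  have : affineSpan ℝ ({u, w₁, w₂} : Set E3) = pln u w₁ w₂ := by
    apply AffineSubspace.ext_of_direction_eq
    · rw [direction_affineSpan, hdir]; exact heq
    · exact ⟨u, mem_affineSpan ℝ (Set.mem_insert _ _), mem_pln.2 (by
        simp [pfn, sub_self, zero_dotProduct])⟩
  rw [this]
  exact mem_pln.2 hx

lemma mem_line_of_openSegment {x u v : E3} (h : x ∈ openSegment ℝ u v) :
    u ∈ line[ℝ, x, v] := by
  obtain ⟨a, b, ha, hb, hab, hx⟩ := h
  have key : AffineMap.lineMap x v (-(b / a)) = u := by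
    rw [AffineMap.lineMap_apply]
    show (-(b / a)) • (v - x) + x = u
    rw [← hx]
    have ha' : a ≠ 0 := ne_of_gt ha
    match_scalars
    · field_simp
      linear_combination b * hab
    · field_simp
      linear_combination hab
  rw [← key]
  exact AffineMap.lineMap_mem_affineSpan_pair _ _ _

lemma collinear_aux {x u v w : E3} (h1 : x ∈ openSegment ℝ u v)
    (h2 : x ∈ openSegment ℝ w v) : Collinear ℝ ({u, v, w} : Set E3) := by
  have hu : u ∈ line[ℝ, x, v] := mem_line_of_openSegment h1
  have hw : w ∈ line[ℝ, x, v] := mem_line_of_openSegment h2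
  have h := collinear_insert_insert_of_mem_affineSpan_pair hu hw
  exact h.subset (by intro t ht; simp at ht ⊢; tauto)

lemma coplanar_aux {x u v w z : E3} (h1 : x ∈ openSegment ℝ u v)
    (h2 : x ∈ openSegment ℝ w z) : Coplanar ℝ ({u, v, w, z} : Set E3) := by
  have hu : u ∈ line[ℝ, x, v] := mem_line_of_openSegment h1
  have hw : w ∈ line[ℝ, x, z] := mem_line_of_openSegment h2
  have h0 : Coplanar ℝ ({x, v, z} : Set E3) := coplanar_triple ℝ x v z
  have h1' : Coplanar ℝ (insert u ({x, v, z} : Set E3)) := by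
    rw [coplanar_insert_iff_of_mem_affineSpan
      ((affineSpan_mono ℝ (by intro t ht; simp at ht ⊢; tauto :
        ({x, v} : Set E3) ⊆ {x, v, z})) hu)]
    exact h0
  have h2' : Coplanar ℝ (insert w (insert u ({x, v, z} : Set E3))) := by
    rw [coplanar_insert_iff_of_mem_affineSpan
      ((affineSpan_mono ℝ (by intro t ht; simp at ht ⊢; tauto :
        ({x, z} : Set E3) ⊆ insert u {x, v, z})) hw)]
    exact h1'
  exact h2'.subset (by intro t ht; simp at ht ⊢; tauto)


/-- For a hexagonal trefoil knot with the Huh–Jeon pattern, `P2 ∩ P5`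
(= `QLine 0`) is a line meeting `K` in at least four distinct points, one on each of the
edges `e12, e23, e45, e56` (edges `0, 1, 3, 4` here); i.e. it is a quadrisecant of `K`. -/

theorem stmt6 (H : Hexagon) (hgp : H.GeneralPosition) (hhj : H.HuhJeon)
    (htre : IsTrefoil H.K) :
    IsLine (H.QLine 0) ∧
    (∃ a q p b : E3, a ∈ H.edge 0 ∩ H.QLine 0 ∧ q ∈ H.edge 1 ∩ H.QLine 0 ∧
      p ∈ H.edge 3 ∩ H.QLine 0 ∧ b ∈ H.edge 4 ∩ H.QLine 0 ∧
      a ≠ q ∧ a ≠ p ∧ a ≠ b ∧ q ≠ p ∧ q ≠ b ∧ p ≠ b) ∧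
    H.IsQuadrisecant (H.QLine 0) := by
  classical
  obtain ⟨gp3, gp4⟩ := hgp
  -- plane descriptions
  have hQ : H.QLine 0 = (H.P 1 : Set E3) ∩ (H.P 4 : Set E3) := by
    unfold Hexagon.QLine
    rw [show (0 : Fin 6) + 1 = 1 from by decide, show (0 : Fin 6) + 4 = 4 from by decide]
  have hP1 : H.P 1 = affineSpan ℝ ({H.v 0, H.v 1, H.v 2} : Set E3) := by
    unfold Hexagon.P
    rw [show (1 : Fin 6) - 1 = 0 from by decide, show (1 : Fin 6) + 1 = 2 from by decide]
  have hP4 : H.P 4 = affineSpan ℝ ({H.v 3, H.v 4, H.v 5} : Set E3) := by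
    unfold Hexagon.P
    rw [show (4 : Fin 6) - 1 = 3 from by decide, show (4 : Fin 6) + 1 = 5 from by decide]
  have hE0 : H.edge 0 = segment ℝ (H.v 0) (H.v 1) := by
    unfold Hexagon.edge; rw [show (0 : Fin 6) + 1 = 1 from by decide]
  have hE1 : H.edge 1 = segment ℝ (H.v 1) (H.v 2) := by
    unfold Hexagon.edge; rw [show (1 : Fin 6) + 1 = 2 from by decide]
  have hE3 : H.edge 3 = segment ℝ (H.v 3) (H.v 4) := by
    unfold Hexagon.edge; rw [show (3 : Fin 6) + 1 = 4 from by decide]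
  have hE4 : H.edge 4 = segment ℝ (H.v 4) (H.v 5) := by
    unfold Hexagon.edge; rw [show (4 : Fin 6) + 1 = 5 from by decide]
  have hIE1 : H.intEdge 1 = openSegment ℝ (H.v 1) (H.v 2) := by
    unfold Hexagon.intEdge; rw [show (1 : Fin 6) + 1 = 2 from by decide]
  have hIE3 : H.intEdge 3 = openSegment ℝ (H.v 3) (H.v 4) := by
    unfold Hexagon.intEdge; rw [show (3 : Fin 6) + 1 = 4 from by decide]
  have hD4 : H.disk 4 = convexHull ℝ ({H.v 3, H.v 4, H.v 5} : Set E3) := by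
    unfold Hexagon.disk
    rw [show (4 : Fin 6) - 1 = 3 from by decide, show (4 : Fin 6) + 1 = 5 from by decide]
  have hD1 : H.disk 1 = convexHull ℝ ({H.v 0, H.v 1, H.v 2} : Set E3) := by
    unfold Hexagon.disk
    rw [show (1 : Fin 6) - 1 = 0 from by decide, show (1 : Fin 6) + 1 = 2 from by decide]
  have hD0 : H.disk 0 = convexHull ℝ ({H.v 5, H.v 0, H.v 1} : Set E3) := by
    unfold Hexagon.disk
    rw [show (0 : Fin 6) - 1 = 5 from by decide, show (0 : Fin 6) + 1 = 1 from by decide]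
  have hD5 : H.disk 5 = convexHull ℝ ({H.v 4, H.v 5, H.v 0} : Set E3) := by
    unfold Hexagon.disk
    rw [show (5 : Fin 6) - 1 = 4 from by decide, show (5 : Fin 6) + 1 = 0 from by decide]
  -- general position facts
  have hc012 : ¬ Collinear ℝ ({H.v 0, H.v 1, H.v 2} : Set E3) :=
    gp3 0 1 2 (by decide) (by decide) (by decide)
  have hc345 : ¬ Collinear ℝ ({H.v 3, H.v 4, H.v 5} : Set E3) :=
    gp3 3 4 5 (by decide) (by decide) (by decide)
  have hf4 : pfn (H.v 0) (H.v 1) (H.v 2) (H.v 4) ≠ 0 :=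
    pfn_ne_zero (gp4 0 1 2 4 (by decide) (by decide) (by decide) (by decide) (by decide) (by decide))
  have hf5 : pfn (H.v 0) (H.v 1) (H.v 2) (H.v 5) ≠ 0 :=
    pfn_ne_zero (gp4 0 1 2 5 (by decide) (by decide) (by decide) (by decide) (by decide) (by decide))
  have hg0 : pfn (H.v 3) (H.v 4) (H.v 5) (H.v 0) ≠ 0 :=
    pfn_ne_zero (gp4 3 4 5 0 (by decide) (by decide) (by decide) (by decide) (by decide) (by decide))
  have hg1 : pfn (H.v 3) (H.v 4) (H.v 5) (H.v 1) ≠ 0 :=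
    pfn_ne_zero (gp4 3 4 5 1 (by decide) (by decide) (by decide) (by decide) (by decide) (by decide))
  -- plane membership characterizations
  have hfmem : ∀ x, x ∈ H.P 1 → pfn (H.v 0) (H.v 1) (H.v 2) x = 0 := by
    intro x hx; rw [hP1] at hx; exact pfn_zero_of_mem hx
  have hfmem' : ∀ x, pfn (H.v 0) (H.v 1) (H.v 2) x = 0 → x ∈ H.P 1 := by
    intro x hx; rw [hP1]; exact mem_span_of_pfn_eq_zero hc012 hf4 hx
  have hgmem : ∀ x, x ∈ H.P 4 → pfn (H.v 3) (H.v 4) (H.v 5) x = 0 := by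
    intro x hx; rw [hP4] at hx; exact pfn_zero_of_mem hx
  have hgmem' : ∀ x, pfn (H.v 3) (H.v 4) (H.v 5) x = 0 → x ∈ H.P 4 := by
    intro x hx; rw [hP4]; exact mem_span_of_pfn_eq_zero hc345 hg0 hx
  -- vertex memberships
  have hv0P1 : H.v 0 ∈ H.P 1 := by rw [hP1]; exact subset_affineSpan ℝ _ (by simp)
  have hv1P1 : H.v 1 ∈ H.P 1 := by rw [hP1]; exact subset_affineSpan ℝ _ (by simp)
  have hv2P1 : H.v 2 ∈ H.P 1 := by rw [hP1]; exact subset_affineSpan ℝ _ (by simp)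
  have hv3P4 : H.v 3 ∈ H.P 4 := by rw [hP4]; exact subset_affineSpan ℝ _ (by simp)
  have hv4P4 : H.v 4 ∈ H.P 4 := by rw [hP4]; exact subset_affineSpan ℝ _ (by simp)
  have hv5P4 : H.v 5 ∈ H.P 4 := by rw [hP4]; exact subset_affineSpan ℝ _ (by simp)
  have hseg01 : segment ℝ (H.v 0) (H.v 1) ⊆ (H.P 1 : Set E3) :=
    (H.P 1).convex.segment_subset hv0P1 hv1P1
  have hseg12 : segment ℝ (H.v 1) (H.v 2) ⊆ (H.P 1 : Set E3) :=
    (H.P 1).convex.segment_subset hv1P1 hv2P1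
  have hseg34 : segment ℝ (H.v 3) (H.v 4) ⊆ (H.P 4 : Set E3) :=
    (H.P 4).convex.segment_subset hv3P4 hv4P4
  have hseg45 : segment ℝ (H.v 4) (H.v 5) ⊆ (H.P 4 : Set E3) :=
    (H.P 4).convex.segment_subset hv4P4 hv5P4
  -- the point q (from pattern (1,4))
  obtain ⟨q, hq_o, hq_i⟩ := (hhj 1 4).2 (by simp)
  rw [hIE1] at hq_o
  have hq_hull : q ∈ convexHull ℝ ({H.v 3, H.v 4, H.v 5} : Set E3) := by
    have := intrinsicInterior_subset hq_i
    rwa [hD4] at this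
  have hqP1 : q ∈ H.P 1 := hseg12 (openSegment_subset_segment _ _ _ hq_o)
  have hqP4 : q ∈ H.P 4 := by
    rw [hP4]; exact convexHull_subset_affineSpan _ hq_hull
  have hqL : q ∈ H.QLine 0 := by rw [hQ]; exact ⟨hqP1, hqP4⟩
  have hqE : q ∈ H.edge 1 := by rw [hE1]; exact openSegment_subset_segment _ _ _ hq_o
  -- the point p (from pattern (3,1))
  obtain ⟨p, hp_o, hp_i⟩ := (hhj 3 1).2 (by simp)
  rw [hIE3] at hp_o
  have hp_hull : p ∈ convexHull ℝ ({H.v 0, H.v 1, H.v 2} : Set E3) := by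
    have := intrinsicInterior_subset hp_i
    rwa [hD1] at this
  have hpP4 : p ∈ H.P 4 := hseg34 (openSegment_subset_segment _ _ _ hp_o)
  have hpP1 : p ∈ H.P 1 := by
    rw [hP1]; exact convexHull_subset_affineSpan _ hp_hull
  have hpL : p ∈ H.QLine 0 := by rw [hQ]; exact ⟨hpP1, hpP4⟩
  have hpE : p ∈ H.edge 3 := by rw [hE3]; exact openSegment_subset_segment _ _ _ hp_o
  -- the point a (from pattern (3,0))
  obtain ⟨r, hr_o, hr_i⟩ := (hhj 3 0).2 (by simp)
  rw [hIE3] at hr_o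
  have hr_hull : r ∈ convexHull ℝ ({H.v 5, H.v 0, H.v 1} : Set E3) := by
    have := intrinsicInterior_subset hr_i
    rwa [hD0] at this
  have hrg : pfn (H.v 3) (H.v 4) (H.v 5) r = 0 :=
    hgmem r (hseg34 (openSegment_subset_segment _ _ _ hr_o))
  rw [convexHull_insert (Set.insert_nonempty _ _), mem_convexJoin] at hr_hull
  obtain ⟨a5, ha5, z, hz, hrseg⟩ := hr_hull
  rw [Set.mem_singleton_iff] at ha5
  subst ha5
  rw [convexHull_pair] at hz
  obtain ⟨c, d, hc, hd, hcd, hrcd⟩ := hrseg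
  have hgz0 : d * pfn (H.v 3) (H.v 4) (H.v 5) z = 0 := by
    have := pfn_combo (H.v 3) (H.v 4) (H.v 5) (H.v 5) z hcd
    rw [hrcd] at this
    rw [pfn_w₂] at this
    rw [this] at hrg
    linarith [hrg]
  have hd0 : d ≠ 0 := by
    intro hd'
    subst hd'
    have hc1 : c = 1 := by linarith
    have hrv5 : r = H.v 5 := by
      rw [← hrcd, hc1]; simp
    rw [hrv5] at hr_o
    have h5line : H.v 5 ∈ line[ℝ, H.v 3, H.v 4] :=
      (affineSpan ℝ ({H.v 3, H.v 4} : Set E3)).convex.segment_subset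
        (subset_affineSpan ℝ _ (by simp)) (subset_affineSpan ℝ _ (by simp))
        (openSegment_subset_segment _ _ _ hr_o)
    have := collinear_insert_of_mem_affineSpan_pair h5line
    exact hc345 (this.subset (by intro t ht; simp at ht ⊢; tauto))
  have hgz : pfn (H.v 3) (H.v 4) (H.v 5) z = 0 := by
    rcases mul_eq_zero.1 hgz0 with h | h
    · exact absurd h hd0
    · exact h
  have haP4 : z ∈ H.P 4 := hgmem' z hgz
  have haP1 : z ∈ H.P 1 := hseg01 hz
  have haL : z ∈ H.QLine 0 := by rw [hQ]; exact ⟨haP1, haP4⟩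
  have haE : z ∈ H.edge 0 := by rw [hE0]; exact hz
  have ha_o : z ∈ openSegment ℝ (H.v 0) (H.v 1) := by
    obtain ⟨e, f', he, hf', hef, hzef⟩ := hz
    have hrel : e * pfn (H.v 3) (H.v 4) (H.v 5) (H.v 0)
        + f' * pfn (H.v 3) (H.v 4) (H.v 5) (H.v 1) = 0 := by
      have := pfn_combo (H.v 3) (H.v 4) (H.v 5) (H.v 0) (H.v 1) hef
      rw [hzef] at this
      rw [hgz] at this
      linarith [this]
    have he0 : e ≠ 0 := by
      intro h
      subst h
      have : f' = 1 := by linarith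
      rw [this] at hrel
      simp at hrel
      exact hg1 (by linarith)
    have hf'0 : f' ≠ 0 := by
      intro h
      subst h
      have : e = 1 := by linarith
      rw [this] at hrel
      simp at hrel
      exact hg0 (by linarith)
    exact ⟨e, f', lt_of_le_of_ne he (Ne.symm he0), lt_of_le_of_ne hf' (Ne.symm hf'0), hef, hzef⟩
  -- the point b (from pattern (1,5))
  obtain ⟨r2, hr2_o, hr2_i⟩ := (hhj 1 5).2 (by simp)
  rw [hIE1] at hr2_o
  have hr2_hull : r2 ∈ convexHull ℝ ({H.v 4, H.v 5, H.v 0} : Set E3) := by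
    have := intrinsicInterior_subset hr2_i
    rwa [hD5] at this
  have hset450 : ({H.v 4, H.v 5, H.v 0} : Set E3) = insert (H.v 0) {H.v 4, H.v 5} := by
    ext t; simp; tauto
  rw [hset450] at hr2_hull
  have hr2f : pfn (H.v 0) (H.v 1) (H.v 2) r2 = 0 :=
    hfmem r2 (hseg12 (openSegment_subset_segment _ _ _ hr2_o))
  rw [convexHull_insert (Set.insert_nonempty _ _), mem_convexJoin] at hr2_hull
  obtain ⟨a0, ha0, z', hz', hr2seg⟩ := hr2_hull
  rw [Set.mem_singleton_iff] at ha0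
  subst ha0
  rw [convexHull_pair] at hz'
  obtain ⟨c2, d2, hc2, hd2, hcd2, hr2cd⟩ := hr2seg
  have hfz0 : d2 * pfn (H.v 0) (H.v 1) (H.v 2) z' = 0 := by
    have := pfn_combo (H.v 0) (H.v 1) (H.v 2) (H.v 0) z' hcd2
    rw [hr2cd] at this
    rw [pfn_self] at this
    rw [this] at hr2f
    linarith [hr2f]
  have hd20 : d2 ≠ 0 := by
    intro hd'
    subst hd'
    have hc1 : c2 = 1 := by linarith
    have hrv0 : r2 = H.v 0 := by
      rw [← hr2cd, hc1]; simp
    rw [hrv0] at hr2_o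
    have h0line : H.v 0 ∈ line[ℝ, H.v 1, H.v 2] :=
      (affineSpan ℝ ({H.v 1, H.v 2} : Set E3)).convex.segment_subset
        (subset_affineSpan ℝ _ (by simp)) (subset_affineSpan ℝ _ (by simp))
        (openSegment_subset_segment _ _ _ hr2_o)
    have := collinear_insert_of_mem_affineSpan_pair h0line
    exact hc012 (this.subset (by intro t ht; simp at ht ⊢; tauto))
  have hfz : pfn (H.v 0) (H.v 1) (H.v 2) z' = 0 := by
    rcases mul_eq_zero.1 hfz0 with h | h
    · exact absurd h hd20
    · exact h
  have hbP1 : z' ∈ H.P 1 := hfmem' z' hfz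
  have hbP4 : z' ∈ H.P 4 := hseg45 hz'
  have hbL : z' ∈ H.QLine 0 := by rw [hQ]; exact ⟨hbP1, hbP4⟩
  have hbE : z' ∈ H.edge 4 := by rw [hE4]; exact hz'
  have hb_o : z' ∈ openSegment ℝ (H.v 4) (H.v 5) := by
    obtain ⟨e, f', he, hf', hef, hzef⟩ := hz'
    have hrel : e * pfn (H.v 0) (H.v 1) (H.v 2) (H.v 4)
        + f' * pfn (H.v 0) (H.v 1) (H.v 2) (H.v 5) = 0 := by
      have := pfn_combo (H.v 0) (H.v 1) (H.v 2) (H.v 4) (H.v 5) hef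
      rw [hzef] at this
      rw [hfz] at this
      linarith [this]
    have he0 : e ≠ 0 := by
      intro h
      subst h
      have : f' = 1 := by linarith
      rw [this] at hrel
      simp at hrel
      exact hf5 (by linarith)
    have hf'0 : f' ≠ 0 := by
      intro h
      subst h
      have : e = 1 := by linarith
      rw [this] at hrel
      simp at hrel
      exact hf4 (by linarith)
    exact ⟨e, f', lt_of_le_of_ne he (Ne.symm he0), lt_of_le_of_ne hf' (Ne.symm hf'0), hef, hzef⟩
  -- distinctness
  have haq : z ≠ q := by
    intro h
    apply gp3 0 1 2 (by decide) (by decide) (by decide)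
    apply collinear_aux ha_o
    rw [openSegment_symm]
    rw [h]
    exact hq_o
  have hap : z ≠ p := by
    intro h
    apply gp4 0 1 3 4 (by decide) (by decide) (by decide) (by decide) (by decide) (by decide)
    exact coplanar_aux ha_o (h ▸ hp_o)
  have hab2 : z ≠ z' := by
    intro h
    apply gp4 0 1 4 5 (by decide) (by decide) (by decide) (by decide) (by decide) (by decide)
    exact coplanar_aux ha_o (h ▸ hb_o)
  have hqp : q ≠ p := by
    intro h
    apply gp4 1 2 3 4 (by decide) (by decide) (by decide) (by decide) (by decide) (by decide)
    exact coplanar_aux hq_o (h ▸ hp_o)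
  have hqb : q ≠ z' := by
    intro h
    apply gp4 1 2 4 5 (by decide) (by decide) (by decide) (by decide) (by decide) (by decide)
    exact coplanar_aux hq_o (h ▸ hb_o)
  have hpb : p ≠ z' := by
    intro h
    apply gp3 3 4 5 (by decide) (by decide) (by decide)
    apply collinear_aux hp_o
    rw [openSegment_symm]
    rw [h]
    exact hb_o
  -- IsLine
  have hfrP1 : Module.finrank ℝ (H.P 1).direction = 2 := by
    rw [hP1, direction_affineSpan]
    exact finrank_vectorSpan_triple hc012
  have hfrP4 : Module.finrank ℝ (H.P 4).direction = 2 := by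
    rw [hP4, direction_affineSpan]
    exact finrank_vectorSpan_triple hc345
  have hLine : IsLine (H.QLine 0) := by
    refine ⟨q, p, hqp, ?_⟩
    rw [hQ]
    apply Set.Subset.antisymm
    · rintro x ⟨hx1, hx4⟩
      by_contra hxL
      have hncol : ¬ Collinear ℝ ({x, q, p} : Set E3) := by
        intro hcol
        exact hxL (hcol.mem_affineSpan_of_mem_of_ne (by simp) (by simp) (by simp) hqp)
      have hT2 : Module.finrank ℝ (vectorSpan ℝ ({x, q, p} : Set E3)) = 2 :=
        finrank_vectorSpan_triple hncol
      have hTle1 : affineSpan ℝ ({x, q, p} : Set E3) ≤ H.P 1 := by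
        rw [affineSpan_le]
        rintro t (rfl | rfl | rfl)
        · exact hx1
        · exact hqP1
        · exact hpP1
      have hTle4 : affineSpan ℝ ({x, q, p} : Set E3) ≤ H.P 4 := by
        rw [affineSpan_le]
        rintro t (rfl | rfl | rfl)
        · exact hx4
        · exact hqP4
        · exact hpP4
      have hd1 : (affineSpan ℝ ({x, q, p} : Set E3)).direction = (H.P 1).direction := by
        apply Submodule.eq_of_le_of_finrank_le (AffineSubspace.direction_le hTle1)
        rw [hfrP1, direction_affineSpan, hT2]
      have hd4 : (affineSpan ℝ ({x, q, p} : Set E3)).direction = (H.P 4).direction := by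
        apply Submodule.eq_of_le_of_finrank_le (AffineSubspace.direction_le hTle4)
        rw [hfrP4, direction_affineSpan, hT2]
      have hPP : H.P 1 = H.P 4 :=
        AffineSubspace.ext_of_direction_eq (hd1.symm.trans hd4) ⟨q, hqP1, hqP4⟩
      have : H.v 0 ∈ H.P 4 := by rw [← hPP]; exact hv0P1
      exact hg0 (hgmem _ this)
    · have h1 : affineSpan ℝ ({q, p} : Set E3) ≤ H.P 1 := by
        rw [affineSpan_le]
        rintro t (rfl | rfl)
        · exact hqP1
        · exact hpP1
      have h4 : affineSpan ℝ ({q, p} : Set E3) ≤ H.P 4 := by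
        rw [affineSpan_le]
        rintro t (rfl | rfl)
        · exact hqP4
        · exact hpP4
      intro t ht
      exact ⟨h1 ht, h4 ht⟩
  refine ⟨hLine, ⟨z, q, p, z', ⟨haE, haL⟩, ⟨hqE, hqL⟩, ⟨hpE, hpL⟩, ⟨hbE, hbL⟩,
    haq, hap, hab2, hqp, hqb, hpb⟩, hLine, ?_⟩
  refine ⟨({z, q, p, z'} : Finset E3), ?_, ?_⟩
  · rw [Finset.card_insert_of_notMem (by simp [haq, hap, hab2]),
      Finset.card_insert_of_notMem (by simp [hqp, hqb]),
      Finset.card_insert_of_notMem (by simp [hpb]), Finset.card_singleton]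
  · intro x hx
    simp only [Finset.coe_insert, Set.mem_insert_iff, Finset.coe_singleton,
      Set.mem_singleton_iff] at hx
    have hK : ∀ i, H.edge i ⊆ H.K := fun i => Set.subset_iUnion H.edge i
    rcases hx with rfl | rfl | rfl | rfl
    · exact ⟨hK 0 haE, haL⟩
    · exact ⟨hK 1 hqE, hqL⟩
    · exact ⟨hK 3 hpE, hpL⟩
    · exact ⟨hK 4 hbE, hbL⟩
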